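/- Let S be a symplectic Hilbert space and I₂ ⊆ I₁ two closed cofinite isotropic subspaces (cofinite meaning the symplectic reductions S_{I_i} = I_i^♯ ∩ I_i^⊥ are finite-dimensional). Let I = I₁ ∩ I₂^⊥. Then I is an isotropic subspace of the symplectic space S_{I₂}, and the iterated reduction satisfies (S_{I₂})_I = S_{I₁}. -/

import Mathlib

open RealInnerProductSpace

variable {S : Type*} [NormedAddCommGroup S] [InnerProductSpace ℝ S] [CompleteSpace S]

/-- The symplectic annihilator of `W` with respect to the symplectic form
`ω u v = ⟪J u, v⟫`. -/
def sympAnn (J : S →ₗ[ℝ] S) (W : Submodule ℝ S) : Submodule ℝ S where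
  carrier := {v : S | ∀ u ∈ W, ⟪J u, v⟫ = 0}
  zero_mem' := by intro u _; simp
  add_mem' := by
    intro a b ha hb u hu
    rw [inner_add_right, ha u hu, hb u hu, add_zero]
  smul_mem' := by
    intro c a ha u hu
    rw [real_inner_smul_right, ha u hu, mul_zero]

lemma sympAnn_eq_orth (J : S →ₗ[ℝ] S) (W : Submodule ℝ S) :
    sympAnn J W = (W.map J)ᗮ := by
  ext v
  constructor
  · intro hv u hu
    obtain ⟨y, hy, rfl⟩ := hu
    exact hv y hy
  · intro hv u hu
    exact hv (J u) ⟨u, hu, rfl⟩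

lemma sympAnn_antitone (J : S →ₗ[ℝ] S) {W W' : Submodule ℝ S} (h : W ≤ W') :
    sympAnn J W' ≤ sympAnn J W := fun v hv u hu => hv u (h hu)

lemma sympAnn_sup (J : S →ₗ[ℝ] S) (K L : Submodule ℝ S) :
    sympAnn J (K ⊔ L) = sympAnn J K ⊓ sympAnn J L := by
  rw [sympAnn_eq_orth, sympAnn_eq_orth, sympAnn_eq_orth, Submodule.map_sup,
    Submodule.inf_orthogonal]

/-- Iterated symplectic reduction: if `I₂ ⊆ I₁` are closed cofinite isotropic
subspaces and `I = I₁ ∩ I₂^⊥`, then `I` is an isotropic subspace of the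
reduction `S_{I₂}` and `(S_{I₂})_I = S_{I₁}`. -/
theorem statement15
    (J : S →ₗ[ℝ] S)
    (hiso : ∀ u v : S, ⟪J u, J v⟫ = ⟪u, v⟫)
    (hJ2 : ∀ u : S, J (J u) = -u)
    (I₁ I₂ : Submodule ℝ S)
    (hI₁c : IsClosed (I₁ : Set S)) (hI₂c : IsClosed (I₂ : Set S))
    (hsub : I₂ ≤ I₁)
    (hI₁iso : I₁ ≤ sympAnn J I₁) (hI₂iso : I₂ ≤ sympAnn J I₂)
    (hcof₁ : FiniteDimensional ℝ ↥(sympAnn J I₁ ⊓ I₁ᗮ))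
    (hcof₂ : FiniteDimensional ℝ ↥(sympAnn J I₂ ⊓ I₂ᗮ)) :
    I₁ ⊓ I₂ᗮ ≤ sympAnn J I₂ ⊓ I₂ᗮ ∧
    I₁ ⊓ I₂ᗮ ≤ sympAnn J (I₁ ⊓ I₂ᗮ) ∧
    (sympAnn J I₂ ⊓ I₂ᗮ) ⊓ sympAnn J (I₁ ⊓ I₂ᗮ) ⊓ (I₁ ⊓ I₂ᗮ)ᗮ =
      sympAnn J I₁ ⊓ I₁ᗮ := by
  -- key decomposition : I₁ = I₂ ⊔ (I₁ ⊓ I₂ᗮ)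
  haveI : CompleteSpace I₂ := hI₂c.completeSpace_coe
  have hdec : I₁ = I₂ ⊔ (I₁ ⊓ I₂ᗮ) := by
    apply le_antisymm
    · intro x hx
      have hp : (Submodule.orthogonalProjection I₂ x : S) ∈ I₂ := (Submodule.orthogonalProjection I₂ x).2
      have hsubmem : x - (Submodule.orthogonalProjection I₂ x : S) ∈ I₁ ⊓ I₂ᗮ :=
        ⟨I₁.sub_mem hx (hsub hp), I₂.sub_starProjection_mem_orthogonal x⟩
      have : x = (Submodule.orthogonalProjection I₂ x : S) + (x - (Submodule.orthogonalProjection I₂ x : S)) := by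
        abel
      rw [this]
      exact Submodule.add_mem _ (Submodule.mem_sup_left hp) (Submodule.mem_sup_right hsubmem)
    · exact sup_le hsub inf_le_left
  refine ⟨?_, ?_, ?_⟩
  · exact fun v hv => ⟨sympAnn_antitone J hsub (hI₁iso hv.1), hv.2⟩
  · exact fun v hv => sympAnn_antitone J inf_le_left (hI₁iso hv.1)
  · have h1 : sympAnn J I₁ = sympAnn J I₂ ⊓ sympAnn J (I₁ ⊓ I₂ᗮ) := by
      conv_lhs => rw [hdec]
      exact sympAnn_sup J _ _
    have h2 : I₁ᗮ = I₂ᗮ ⊓ (I₁ ⊓ I₂ᗮ)ᗮ := by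
      conv_lhs => rw [hdec]
      rw [Submodule.inf_orthogonal]
    rw [h1, h2]
    ac_rfl
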